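/- Let 𝔤 be a finite-dimensional Lie algebra and c ∈ Sym²(𝔤) invariant. Then φ := −(1/6)[c₁₂, c₂₃] ∈ U(𝔤)⊗³ lies in ∧³(𝔤) (i.e. it is totally antisymmetric and lies in 𝔤⊗𝔤⊗𝔤 ⊂ U(𝔤)⊗³) and is 𝔤-invariant. -/
import Mathlib


/-!
STATEMENT 11: For a finite-dimensional Lie algebra `𝔤` and an invariant symmetric
element `c ∈ Sym²(𝔤)`, the element `φ := -(1/6)[c₁₂, c₂₃] ∈ U(𝔤)^{⊗3}` lies in
`∧³(𝔤) ⊂ 𝔤^{⊗3}` (it is totally antisymmetric) and is `𝔤`-invariant.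

In coordinates (basis `e_i`, structure constants `f`, `c = ∑ c i j • e_i ⊗ e_j`),
the commutator `[c₁₂, c₂₃]` computed in `U(𝔤)^{⊗3}` lands in `𝔤^{⊗3}` with components
`[c₁₂,c₂₃]^{ijl} = ∑ b b', c i b * f b b' j * c b' l`, so `φ` has the components
`phiOf` below; total antisymmetry and invariance are then the stated conclusions.
-/

open Finset

variable {k ι : Type*}

/-- Antisymmetry of structure constants. -/
def LieAntisymm [Field k] (f : ι → ι → ι → k) : Prop :=
  ∀ i j l, f i j l = - f j i l

/-- Jacobi identity for structure constants. -/
def LieJacobi [Field k] [Fintype ι] (f : ι → ι → ι → k) : Prop :=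
  ∀ i j l m, ∑ a, (f i j a * f a l m + f j l a * f a i m + f l i a * f a j m) = 0

/-- Components of the Chevalley–Eilenberg differential `(d_CE δ)(e_p, e_q)^{ij}` of a
`∧²𝔤`-valued 1-cochain `δ` (adjoint action coefficients), i.e.
`e_p·δ(e_q) - e_q·δ(e_p) - δ(⁅e_p,e_q⁆)`. -/
def dCEone [Field k] [Fintype ι] (f δ : ι → ι → ι → k) (p q i j : ι) : k :=
  (∑ a, (f p a i * δ q a j + f p a j * δ q i a))
    - (∑ a, (f q a i * δ p a j + f q a j * δ p i a))
    - (∑ a, f p q a * δ a i j)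

/-- Components of the Chevalley–Eilenberg differential `(d_CE λ)(e_p)^{ij} = (e_p·λ)^{ij}`
of a `∧²𝔤`-valued 0-cochain (bivector) `λ`. -/
def dCEtwo [Field k] [Fintype ι] (f : ι → ι → ι → k) (lam : ι → ι → k) (p i j : ι) : k :=
  ∑ a, (f p a i * lam a j + f p a j * lam i a)

/-- Components of the adjoint action `(e_p · φ)^{ijl}` of `𝔤` on a trivector `φ ∈ ∧³𝔤`;
this is `(d_CE φ)(e_p)` for the 0-cochain `φ`. -/
def adActTri [Field k] [Fintype ι] (f : ι → ι → ι → k) (φ : ι → ι → ι → k)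
    (p i j l : ι) : k :=
  ∑ a, (f p a i * φ a j l + f p a j * φ i a l + f p a l * φ i j a)

/-- Components of the co-Jacobiator `(1/2)[δ,δ](e_p)^{ijl}`: the cyclic sum of
`(δ ⊗ id) ∘ δ`. -/
def coJac [Field k] [Fintype ι] (δ : ι → ι → ι → k) (p i j l : ι) : k :=
  ∑ a, (δ p a l * δ a i j + δ p a i * δ a j l + δ p a j * δ a l i)

/-- Components of the big bracket `[δ, λ]^{ijl}` of a cobracket `δ` with a bivector `λ`
(contraction of the `𝔤*`-leg of `δ` with one leg of `λ`, wedged). -/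
def bigBr [Field k] [Fintype ι] (δ : ι → ι → ι → k) (lam : ι → ι → k) (i j l : ι) : k :=
  ∑ a, (lam a i * δ a j l + lam a j * δ a l i + lam a l * δ a i j)

/-- Components of `(1/2)⟦λ,λ⟧^{ijl}`, the (halved) algebraic Schouten bracket of the
bivector `λ` with itself. -/
def halfSch [Field k] [Fintype ι] (f : ι → ι → ι → k) (lam : ι → ι → k) (i j l : ι) : k :=
  ∑ a, ∑ b, (lam a i * lam b j * f a b l + lam a j * lam b l * f a b i
      + lam a l * lam b i * f a b j)

/-- Components of the big bracket `[δ, φ]` of a cobracket with a trivector: the full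
antisymmetrization (over `S₄`) of the contraction `∑ a, δ a i j * φ a l m`. -/
def bigBrTri [Field k] [Fintype ι] (δ φ : ι → ι → ι → k) (i j l m : ι) : k :=
  ∑ σ : Equiv.Perm (Fin 4),
    ((Equiv.Perm.sign σ : ℤ) : k) *
      ∑ a, δ a (![i, j, l, m] (σ 0)) (![i, j, l, m] (σ 1))
        * φ a (![i, j, l, m] (σ 2)) (![i, j, l, m] (σ 3))

/-- A quasi-Lie bialgebra structure `(δ, φ)` on the Lie algebra with structure constants
`f`: `δ` and `φ` are antisymmetric, `d_CE δ = 0`, `(1/2)[δ,δ] + d_CE φ = 0` and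
`[δ, φ] = 0`. -/
def IsQuasiLieBialgebra [Field k] [Fintype ι] (f δ φ : ι → ι → ι → k) : Prop :=
  (∀ p i j, δ p i j = - δ p j i) ∧
  (∀ i j l, φ i j l = - φ j i l) ∧ (∀ i j l, φ i j l = - φ i l j) ∧
  (∀ p q i j, dCEone f δ p q i j = 0) ∧
  (∀ p i j l, coJac δ p i j l + adActTri f φ p i j l = 0) ∧
  (∀ i j l m, bigBrTri δ φ i j l m = 0)


/-- Invariance of `c ∈ 𝔤 ⊗ 𝔤` under the adjoint action: `e_p · c = 0` for all `p`. -/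
def casimirInvariant [Field k] [Fintype ι] (f : ι → ι → ι → k) (c : ι → ι → k) : Prop :=
  ∀ p i j, ∑ a, (f p a i * c a j + f p a j * c i a) = 0

/-- Components of `φ = -(1/6)[c₁₂, c₂₃]`, the commutator being computed in
`U(𝔤)^{⊗3}`:  `[c₁₂,c₂₃] = ∑ c^{ib} c^{b'l} e_i ⊗ ⁅e_b, e_{b'}⁆ ⊗ e_l ∈ 𝔤^{⊗3}`. -/
def phiOf [Field k] [Fintype ι] (f : ι → ι → ι → k) (c : ι → ι → k) (i j l : ι) : k :=
  -(1/6 : k) * ∑ b, ∑ b', c i b * f b b' j * c b' l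

section Aux
variable [Field k] [Fintype ι] (f : ι → ι → ι → k) (c : ι → ι → k)

def Tm (i j l : ι) : k := ∑ b, ∑ b', c i b * f b b' j * c b' l

lemma inv' (hinv : casimirInvariant f c) (p i j : ι) :
    ∑ a, f p a i * c a j = -∑ a, f p a j * c i a := by
  have h := hinv p i j
  rw [Finset.sum_add_distrib] at h
  exact eq_neg_of_add_eq_zero_left h
end Aux

section Aux2
variable [Field k] [Fintype ι] (f : ι → ι → ι → k) (c : ι → ι → k)

lemma Tm_swap13 (hf₁ : ∀ i j l, f i j l = - f j i l) (hsymm : ∀ i j, c i j = c j i)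
    (i j l : ι) : Tm f c i j l = - Tm f c l j i := by
  have h : Tm f c l j i = ∑ b, ∑ b', c l b' * f b' b j * c b i :=
    Finset.sum_comm
  rw [h]
  have h2 : ∑ b : ι, ∑ b' : ι, c l b' * f b' b j * c b i
      = ∑ b : ι, ∑ b' : ι, -(c i b * f b b' j * c b' l) := by
    refine Finset.sum_congr rfl fun b _ => Finset.sum_congr rfl fun b' _ => ?_
    rw [hf₁ b' b j, hsymm l b', hsymm b i]
    ring
  rw [h2]
  simp [Tm, Finset.sum_neg_distrib]

lemma Tm_swap12 (hf₁ : ∀ i j l, f i j l = - f j i l) (hsymm : ∀ i j, c i j = c j i)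
    (hinv : casimirInvariant f c) (i j l : ι) : Tm f c i j l = - Tm f c j i l := by
  have key : ∀ b' : ι, ∑ b : ι, c i b * f b b' j = -∑ b : ι, c j b * f b b' i := by
    intro b'
    have e1 : ∑ b : ι, c i b * f b b' j = -∑ b : ι, f b' b j * c b i := by
      rw [← Finset.sum_neg_distrib]
      refine Finset.sum_congr rfl fun b _ => ?_
      rw [hf₁ b b' j, hsymm b i]; ring
    rw [e1, inv' f c hinv b' j i, neg_neg, ← Finset.sum_neg_distrib]
    refine Finset.sum_congr rfl fun b _ => ?_
    rw [hf₁ b b' i]; ring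
  have h1 : Tm f c i j l = ∑ b' : ι, (∑ b : ι, c i b * f b b' j) * c b' l := by
    rw [Tm, Finset.sum_comm]
    exact Finset.sum_congr rfl fun b' _ => (Finset.sum_mul _ _ _).symm
  have h2 : Tm f c j i l = ∑ b' : ι, (∑ b : ι, c j b * f b b' i) * c b' l := by
    rw [Tm, Finset.sum_comm]
    exact Finset.sum_congr rfl fun b' _ => (Finset.sum_mul _ _ _).symm
  rw [h1, h2, ← Finset.sum_neg_distrib]
  refine Finset.sum_congr rfl fun b' _ => ?_
  rw [key b']; ring

end Aux2

section Aux3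
variable [Field k] [Fintype ι] (f : ι → ι → ι → k) (c : ι → ι → k)

lemma reorder3 (g : ι → ι → ι → k) :
    ∑ a : ι, ∑ b : ι, ∑ c' : ι, g a b c' = ∑ b : ι, ∑ c' : ι, ∑ a : ι, g a b c' := by
  rw [Finset.sum_comm]
  exact Finset.sum_congr rfl fun _ _ => Finset.sum_comm

lemma Tm_inv (hf₁ : ∀ i j l, f i j l = - f j i l)
    (hf₂ : ∀ i j l m, ∑ a, (f i j a * f a l m + f j l a * f a i m + f l i a * f a j m) = 0)
    (hsymm : ∀ i j, c i j = c j i) (hinv : casimirInvariant f c) (p i j l : ι) :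
    ∑ a, (f p a i * Tm f c a j l + f p a j * Tm f c i a l + f p a l * Tm f c i j a) = 0 := by
  have E1 : ∑ a : ι, f p a i * Tm f c a j l
      = ∑ u : ι, ∑ w : ι, c i u * c l w * (∑ v : ι, -(f p u v * f v w j)) := by
    calc ∑ a : ι, f p a i * Tm f c a j l
        = ∑ a : ι, ∑ b : ι, ∑ b' : ι, f p a i * (c a b * f b b' j * c b' l) := by
          simp only [Tm, Finset.mul_sum]
      _ = ∑ b : ι, ∑ b' : ι, ∑ a : ι, f p a i * (c a b * f b b' j * c b' l) := reorder3 _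
      _ = ∑ b : ι, ∑ b' : ι, ∑ a : ι, -(f p a b * c i a * (f b b' j * c b' l)) := by
          refine Finset.sum_congr rfl fun b _ => Finset.sum_congr rfl fun b' _ => ?_
          have h1 : ∑ a : ι, f p a i * (c a b * f b b' j * c b' l)
              = (∑ a : ι, f p a i * c a b) * (f b b' j * c b' l) := by
            rw [Finset.sum_mul]
            exact Finset.sum_congr rfl fun a _ => by ring
          rw [h1, inv' f c hinv p i b, neg_mul, Finset.sum_mul, ← Finset.sum_neg_distrib]
      _ = ∑ b' : ι, ∑ a : ι, ∑ b : ι, -(f p a b * c i a * (f b b' j * c b' l)) := reorder3 _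
      _ = ∑ a : ι, ∑ b : ι, ∑ b' : ι, -(f p a b * c i a * (f b b' j * c b' l)) := reorder3 _
      _ = ∑ a : ι, ∑ b' : ι, ∑ b : ι, -(f p a b * c i a * (f b b' j * c b' l)) :=
          Finset.sum_congr rfl fun a _ => Finset.sum_comm
      _ = ∑ a : ι, ∑ b' : ι, c i a * c l b' * (∑ b : ι, -(f p a b * f b b' j)) := by
          refine Finset.sum_congr rfl fun a _ => Finset.sum_congr rfl fun b' _ => ?_
          rw [Finset.mul_sum]
          exact Finset.sum_congr rfl fun b _ => by rw [hsymm l b']; ring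
  have E2 : ∑ a : ι, f p a j * Tm f c i a l
      = ∑ u : ι, ∑ w : ι, c i u * c l w * (∑ v : ι, f u w v * f p v j) := by
    calc ∑ a : ι, f p a j * Tm f c i a l
        = ∑ a : ι, ∑ b : ι, ∑ b' : ι, f p a j * (c i b * f b b' a * c b' l) := by
          simp only [Tm, Finset.mul_sum]
      _ = ∑ b : ι, ∑ b' : ι, ∑ a : ι, f p a j * (c i b * f b b' a * c b' l) := reorder3 _
      _ = ∑ b : ι, ∑ b' : ι, c i b * c l b' * (∑ a : ι, f b b' a * f p a j) := by
          refine Finset.sum_congr rfl fun b _ => Finset.sum_congr rfl fun b' _ => ?_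
          rw [Finset.mul_sum]
          exact Finset.sum_congr rfl fun a _ => by rw [hsymm l b']; ring
  have E3 : ∑ a : ι, f p a l * Tm f c i j a
      = ∑ u : ι, ∑ w : ι, c i u * c l w * (∑ v : ι, -(f u v j * f p w v)) := by
    calc ∑ a : ι, f p a l * Tm f c i j a
        = ∑ a : ι, ∑ b : ι, ∑ b' : ι, f p a l * (c i b * f b b' j * c b' a) := by
          simp only [Tm, Finset.mul_sum]
      _ = ∑ b : ι, ∑ b' : ι, ∑ a : ι, f p a l * (c i b * f b b' j * c b' a) := reorder3 _
      _ = ∑ b : ι, ∑ b' : ι, ∑ a : ι, -(f p a b' * c l a * (c i b * f b b' j)) := by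
          refine Finset.sum_congr rfl fun b _ => Finset.sum_congr rfl fun b' _ => ?_
          have h1 : ∑ a : ι, f p a l * (c i b * f b b' j * c b' a)
              = (∑ a : ι, f p a l * c a b') * (c i b * f b b' j) := by
            rw [Finset.sum_mul]
            exact Finset.sum_congr rfl fun a _ => by rw [hsymm a b']; ring
          rw [h1, inv' f c hinv p l b', neg_mul, Finset.sum_mul, ← Finset.sum_neg_distrib]
      _ = ∑ b : ι, ∑ a : ι, ∑ b' : ι, -(f p a b' * c l a * (c i b * f b b' j)) :=
          Finset.sum_congr rfl fun b _ => Finset.sum_comm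
      _ = ∑ b : ι, ∑ a : ι, c i b * c l a * (∑ b' : ι, -(f b b' j * f p a b')) := by
          refine Finset.sum_congr rfl fun b _ => Finset.sum_congr rfl fun a _ => ?_
          rw [Finset.mul_sum]
          exact Finset.sum_congr rfl fun b' _ => by ring
  have hK : ∀ u w : ι,
      (∑ v : ι, -(f p u v * f v w j)) + (∑ v : ι, f u w v * f p v j)
        + (∑ v : ι, -(f u v j * f p w v)) = 0 := by
    intro u w
    have hJ := hf₂ u w p j
    rw [← Finset.sum_add_distrib, ← Finset.sum_add_distrib]
    have h2 : ∑ v : ι, (-(f p u v * f v w j) + f u w v * f p v j + -(f u v j * f p w v))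
        = ∑ v : ι, -(f u w v * f v p j + f w p v * f v u j + f p u v * f v w j) := by
      refine Finset.sum_congr rfl fun v _ => ?_
      rw [hf₁ p v j, hf₁ u v j, hf₁ p w v]
      ring
    rw [h2, Finset.sum_neg_distrib, hJ, neg_zero]
  rw [Finset.sum_add_distrib, Finset.sum_add_distrib, E1, E2, E3,
    ← Finset.sum_add_distrib, ← Finset.sum_add_distrib]
  refine Finset.sum_eq_zero fun u _ => ?_
  rw [← Finset.sum_add_distrib, ← Finset.sum_add_distrib]
  refine Finset.sum_eq_zero fun w _ => ?_
  have h := hK u w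
  linear_combination (c i u * c l w) * h

end Aux3

/-- If `c ∈ Sym²(𝔤)` is invariant then
`φ = -(1/6)[c₁₂,c₂₃] ∈ U(𝔤)^{⊗3}` is totally antisymmetric (i.e. lies in
`∧³(𝔤) ⊂ 𝔤^{⊗3} ⊂ U(𝔤)^{⊗3}`) and is `𝔤`-invariant. -/
theorem phi_of_casimir_antisymm_invariant [Field k] [CharZero k] [Fintype ι]
    (f : ι → ι → ι → k) (c : ι → ι → k)
    (hf₁ : LieAntisymm f) (hf₂ : LieJacobi f)
    (hsymm : ∀ i j, c i j = c j i) (hinv : casimirInvariant f c) :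
    (∀ i j l, phiOf f c i j l = - phiOf f c j i l) ∧
    (∀ i j l, phiOf f c i j l = - phiOf f c i l j) ∧
    (∀ p i j l, adActTri f (phiOf f c) p i j l = 0) := by
  refine ⟨?_, ?_, ?_⟩
  · intro i j l
    have e : ∀ x y z : ι, phiOf f c x y z = -(1/6 : k) * Tm f c x y z := fun _ _ _ => rfl
    rw [e, e, Tm_swap12 f c hf₁ hsymm hinv i j l]
    ring
  · intro i j l
    have e : ∀ x y z : ι, phiOf f c x y z = -(1/6 : k) * Tm f c x y z := fun _ _ _ => rfl
    rw [e, e, Tm_swap13 f c hf₁ hsymm i j l, Tm_swap12 f c hf₁ hsymm hinv l j i,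
      Tm_swap13 f c hf₁ hsymm j l i]
    ring
  · intro p i j l
    have e : ∀ x y z : ι, phiOf f c x y z = -(1/6 : k) * Tm f c x y z := fun _ _ _ => rfl
    have hS := Tm_inv f c hf₁ hf₂ hsymm hinv p i j l
    have h : adActTri f (phiOf f c) p i j l
        = -(1/6 : k) * ∑ a, (f p a i * Tm f c a j l + f p a j * Tm f c i a l
            + f p a l * Tm f c i j a) := by
      unfold adActTri
      rw [Finset.mul_sum]
      refine Finset.sum_congr rfl fun a _ => ?_
      rw [e, e, e]
      ring
    rw [h, hS, mul_zero]
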